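/- For every integer n ≥ 1, the real-valued ratio n_{2n,1}(p_k#)/n_{2,1}(p_k#) of the number of occurrences of the gap 2n to the number of occurrences of the gap 2 in the cycle of gaps of p_k# converges, as k → ∞, to ∏_{q odd prime, q | n} (q − 1)/(q − 2), the ratio implicit in Hardy and Littlewood's Conjecture B. -/

import Mathlib

/-- `nGaps N g j` is the number of driving terms of length `j` for the gap `g`
in the cycle of gaps of `N`. -/
def nGaps (N g j : ℕ) : ℕ :=
  ((Finset.Icc 1 N).filter (fun a =>
    Nat.gcd a N = 1 ∧ Nat.gcd (a + g) N = 1 ∧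
      ((Finset.Ioo a (a + g)).filter (fun b => Nat.gcd b N = 1)).card = j - 1)).card

/-- `nthPrime k` is the `k`-th prime, with `nthPrime 1 = 2`. -/
noncomputable def nthPrime (k : ℕ) : ℕ := Nat.nth Nat.Prime (k - 1)

open Finset Filter

lemma isUnit_prod' {M N : Type*} [Monoid M] [Monoid N] (p : M × N) :
    IsUnit p ↔ IsUnit p.1 ∧ IsUnit p.2 := by
  constructor
  · intro h; exact ⟨h.map (MonoidHom.fst M N), h.map (MonoidHom.snd M N)⟩
  · rintro ⟨⟨u, hu⟩, ⟨v, hv⟩⟩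
    exact ⟨MulEquiv.prodUnits.symm (u, v), by
      obtain ⟨p1, p2⟩ := p
      simp only [MulEquiv.prodUnits] at *
      simp [← hu, ← hv]⟩


def cnt (S : Finset ℕ) (N : ℕ) : ℕ :=
  ((Finset.range N).filter (fun a => ∀ s ∈ S, Nat.gcd (a + s) N = 1)).card

lemma cnt_eq_zmod (S : Finset ℕ) (N : ℕ) [NeZero N] :
    cnt S N = ((Finset.univ : Finset (ZMod N)).filter
      (fun a => ∀ s ∈ S, IsUnit (a + (s : ZMod N)))).card := by
  classical
  refine Finset.card_bij (fun a _ => (a : ZMod N)) ?_ ?_ ?_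
  · intro a ha
    simp only [mem_filter, mem_range] at ha ⊢
    refine ⟨mem_univ _, fun s hs => ?_⟩
    have := ha.2 s hs
    have : Nat.Coprime (a + s) N := this
    have h := (ZMod.isUnit_iff_coprime (a + s) N).mpr this
    simpa using h
  · intro a ha b hb hab
    simp only [mem_filter, mem_range] at ha hb
    have := congrArg ZMod.val hab
    rwa [ZMod.val_cast_of_lt ha.1, ZMod.val_cast_of_lt hb.1] at this
  · intro x hx
    simp only [mem_filter, mem_univ, true_and] at hx
    refine ⟨x.val, ?_, by simp [ZMod.natCast_val]⟩
    simp only [mem_filter, mem_range]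
    refine ⟨ZMod.val_lt x, fun s hs => ?_⟩
    have := hx s hs
    have h : IsUnit ((x.val + s : ℕ) : ZMod N) := by
      push_cast
      simpa [ZMod.natCast_val] using this
    exact (ZMod.isUnit_iff_coprime _ N).mp h

lemma zcnt_mul (S : Finset ℕ) (M N : ℕ) [NeZero M] [NeZero N] (h : Nat.Coprime M N) :
    ((Finset.univ : Finset (ZMod (M * N))).filter
      (fun a => ∀ s ∈ S, IsUnit (a + (s : ZMod (M * N))))).card
    = ((Finset.univ : Finset (ZMod M)).filter
      (fun a => ∀ s ∈ S, IsUnit (a + (s : ZMod M)))).card *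
      ((Finset.univ : Finset (ZMod N)).filter
      (fun a => ∀ s ∈ S, IsUnit (a + (s : ZMod N)))).card := by
  classical
  haveI : NeZero (M * N) := ⟨mul_ne_zero (NeZero.ne M) (NeZero.ne N)⟩
  let e := ZMod.chineseRemainder h
  have key : ((Finset.univ : Finset (ZMod (M * N))).filter
      (fun a => ∀ s ∈ S, IsUnit (a + (s : ZMod (M * N))))).card
      = ((Finset.univ : Finset (ZMod M × ZMod N)).filter
      (fun p => (∀ s ∈ S, IsUnit (p.1 + (s : ZMod M))) ∧
        (∀ s ∈ S, IsUnit (p.2 + (s : ZMod N))))).card := by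
    refine Finset.card_bij (fun a _ => e a) ?_ ?_ ?_
    · intro a ha
      simp only [mem_filter, mem_univ, true_and] at ha ⊢
      have key2 : ∀ s ∈ S, IsUnit ((e a).1 + (s : ZMod M)) ∧ IsUnit ((e a).2 + (s : ZMod N)) := by
        intro s hs
        have h1 : IsUnit (e (a + (s : ZMod (M*N)))) := (ha s hs).map e.toRingHom
        rw [map_add, map_natCast] at h1
        rw [isUnit_prod'] at h1
        simpa using h1
      exact ⟨fun s hs => (key2 s hs).1, fun s hs => (key2 s hs).2⟩
    · intro a _ b _ hab; exact e.injective hab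
    · intro p hp
      refine ⟨e.symm p, ?_, by simp⟩
      simp only [mem_filter, mem_univ, true_and] at hp ⊢
      intro s hs
      have h1 : IsUnit (p + ((s : ZMod M), (s : ZMod N))) := by
        rw [isUnit_prod']
        exact ⟨by simpa using hp.1 s hs, by simpa using hp.2 s hs⟩
      have h2 : IsUnit (e.symm (p + ((s : ZMod M), (s : ZMod N)))) := h1.map e.symm.toRingHom
      rw [map_add] at h2
      convert h2 using 2
      have h3 : e ((s : ZMod (M*N))) = ((s : ZMod M), (s : ZMod N)) := by
        rw [map_natCast]; rfl
      rw [← h3, e.symm_apply_apply]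
  rw [key, ← Finset.card_product]
  congr 1
  ext ⟨a, b⟩
  simp only [mem_filter, mem_univ, true_and, mem_product]

lemma cnt_mul (S : Finset ℕ) {M N : ℕ} (hM : M ≠ 0) (hN : N ≠ 0) (h : Nat.Coprime M N) :
    cnt S (M * N) = cnt S M * cnt S N := by
  haveI : NeZero M := ⟨hM⟩
  haveI : NeZero N := ⟨hN⟩
  haveI : NeZero (M * N) := ⟨mul_ne_zero hM hN⟩
  rw [cnt_eq_zmod, cnt_eq_zmod, cnt_eq_zmod, zcnt_mul S M N h]

lemma cnt_one (S : Finset ℕ) : cnt S 1 = 1 := by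
  simp [cnt, Finset.range_one]

lemma cnt_prod (S : Finset ℕ) (t : Finset ℕ) (ht : ∀ q ∈ t, Nat.Prime q) :
    cnt S (∏ q ∈ t, q) = ∏ q ∈ t, cnt S q := by
  classical
  induction t using Finset.induction_on with
  | empty => simpa using cnt_one S
  | @insert q t hqt ih =>
    rw [Finset.prod_insert hqt, Finset.prod_insert hqt, cnt_mul S, ih]
    · intro r hr; exact ht r (Finset.mem_insert_of_mem hr)
    · exact (ht q (Finset.mem_insert_self q t)).pos.ne'
    · exact (Finset.prod_pos fun r hr => (ht r (Finset.mem_insert_of_mem hr)).pos).ne'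
    · exact Nat.Coprime.prod_right fun r hr =>
        (Nat.coprime_primes (ht q (Finset.mem_insert_self q t))
          (ht r (Finset.mem_insert_of_mem hr))).mpr (fun he => hqt (he ▸ hr))

lemma cnt_prime (S : Finset ℕ) (p : ℕ) (hp : p.Prime) :
    cnt S p = p - (S.image (fun s : ℕ => -(s : ZMod p))).card := by
  classical
  haveI : Fact p.Prime := ⟨hp⟩
  rw [cnt_eq_zmod]
  have key : ((Finset.univ : Finset (ZMod p)).filter
      (fun a => ∀ s ∈ S, IsUnit (a + (s : ZMod p))))
      = Finset.univ \ S.image (fun s : ℕ => -(s : ZMod p)) := by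
    ext a
    simp only [mem_filter, mem_univ, true_and, Finset.mem_sdiff, Finset.mem_image, isUnit_iff_ne_zero]
    constructor
    · rintro h ⟨s, hs, rfl⟩
      exact h s hs (by ring)
    · intro h s hs he
      exact h ⟨s, hs, by linear_combination -he⟩
  rw [key, Finset.card_sdiff_of_subset (Finset.subset_univ _), Finset.card_univ, ZMod.card]

lemma cnt_pair_dvd {g p : ℕ} (hp : p.Prime) (h : p ∣ g) : cnt {0, g} p = p - 1 := by
  classical
  haveI : NeZero p := ⟨hp.pos.ne'⟩
  rw [cnt_prime _ p hp]
  have hg : (g : ZMod p) = 0 := (ZMod.natCast_eq_zero_iff g p).mpr h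
  have : ({0, g} : Finset ℕ).image (fun s : ℕ => -(s : ZMod p)) = {0} := by
    rw [Finset.image_insert, Finset.image_singleton]
    simp [hg]
  rw [this, Finset.card_singleton]

lemma cnt_pair_not_dvd {g p : ℕ} (hp : p.Prime) (h : ¬ p ∣ g) : cnt {0, g} p = p - 2 := by
  classical
  haveI : NeZero p := ⟨hp.pos.ne'⟩
  rw [cnt_prime _ p hp]
  have hg : (g : ZMod p) ≠ 0 := fun he => h ((ZMod.natCast_eq_zero_iff g p).mp he)
  have : ({0, g} : Finset ℕ).image (fun s : ℕ => -(s : ZMod p)) = {0, -(g : ZMod p)} := by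
    rw [Finset.image_insert, Finset.image_singleton]
    simp
  rw [this, Finset.card_insert_of_notMem (by simp [eq_comm, neg_eq_zero, hg]),
    Finset.card_singleton]

lemma cnt_triple {b g p : ℕ} (hp : p.Prime) (hb : 0 < b) (hbg : b < g) (hgp : g < p) :
    cnt {0, b, g} p = p - 3 := by
  classical
  haveI : NeZero p := ⟨hp.pos.ne'⟩
  rw [cnt_prime _ p hp]
  have hcast : ∀ x : ℕ, 0 < x → x < p → (x : ZMod p) ≠ 0 := by
    intro x h1 h2 he
    have := (ZMod.natCast_eq_zero_iff x p).mp he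
    exact absurd (Nat.le_of_dvd h1 this) (not_le.mpr h2)
  have hbz : (b : ZMod p) ≠ 0 := hcast b hb (hbg.trans hgp)
  have hgz : (g : ZMod p) ≠ 0 := hcast g (hb.trans hbg) hgp
  have hbgz : (b : ZMod p) ≠ (g : ZMod p) := by
    intro he
    have : ((g - b : ℕ) : ZMod p) = 0 := by
      push_cast [Nat.cast_sub hbg.le]
      rw [← he]; ring
    exact hcast (g - b) (by omega) (by omega) this
  have : ({0, b, g} : Finset ℕ).image (fun s : ℕ => -(s : ZMod p))
      = {0, -(b : ZMod p), -(g : ZMod p)} := by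
    rw [Finset.image_insert, Finset.image_insert, Finset.image_singleton]
    simp
  rw [this]
  rw [Finset.card_insert_of_notMem (by simp [eq_comm, neg_eq_zero, hbz, hgz]),
    Finset.card_insert_of_notMem (by simp [hbgz]), Finset.card_singleton]

lemma cnt_le (S : Finset ℕ) (N : ℕ) : cnt S N ≤ N := by
  simpa [cnt] using (Finset.card_filter_le (Finset.range N) _)

lemma filter_Icc_range {P : ℕ → Prop} [DecidablePred P] (N : ℕ) (h0 : ¬ P 0) (hN : ¬ P N) :
    (Finset.Icc 1 N).filter P = (Finset.range N).filter P := by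
  ext a
  simp only [mem_filter, mem_Icc, mem_range]
  constructor
  · rintro ⟨⟨h1, h2⟩, hp⟩
    exact ⟨lt_of_le_of_ne h2 (fun he => hN (he ▸ hp)), hp⟩
  · rintro ⟨h1, hp⟩
    refine ⟨⟨?_, h1.le⟩, hp⟩
    rcases Nat.eq_zero_or_pos a with rfl | h; · exact absurd hp h0
    exact h

lemma nGaps_eq_range (N g : ℕ) (hN : 2 ≤ N) :
    nGaps N g 1 = ((Finset.range N).filter (fun a =>
      Nat.gcd a N = 1 ∧ Nat.gcd (a + g) N = 1 ∧
      ((Finset.Ioo a (a + g)).filter (fun b => Nat.gcd b N = 1)).card = 0)).card := by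
  classical
  unfold nGaps
  rw [filter_Icc_range]
  · rintro ⟨h, -⟩; simp at h; omega
  · rintro ⟨h, -⟩; rw [Nat.gcd_self] at h; omega

lemma nGaps_two (N : ℕ) (hN : 2 ≤ N) (h2 : 2 ∣ N) : nGaps N 2 1 = cnt {0, 2} N := by
  classical
  rw [nGaps_eq_range N 2 hN, cnt]
  congr 1
  apply Finset.filter_congr
  intro a _
  constructor
  · rintro ⟨ha, hag, -⟩
    intro s hs
    simp only [Finset.mem_insert, Finset.mem_singleton] at hs
    rcases hs with rfl | rfl
    · simpa using ha
    · exact hag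
  · intro h
    have ha : Nat.gcd a N = 1 := by simpa using h 0 (by simp)
    have hag : Nat.gcd (a + 2) N = 1 := h 2 (by simp)
    refine ⟨ha, hag, ?_⟩
    have hIoo : Finset.Ioo a (a + 2) = {a + 1} := by
      ext x; simp [Finset.mem_Ioo]; omega
    rw [hIoo, Finset.filter_singleton]
    have haodd : ¬ 2 ∣ a := by
      intro hd
      have : 2 ∣ Nat.gcd a N := Nat.dvd_gcd hd h2
      omega
    have : ¬ Nat.gcd (a + 1) N = 1 := by
      intro hg
      have h21 : 2 ∣ a + 1 := by omega
      have : 2 ∣ Nat.gcd (a + 1) N := Nat.dvd_gcd h21 h2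
      omega
    simp [this]

lemma nGaps_bounds (N g : ℕ) (hN : 2 ≤ N) (hg : 0 < g) :
    nGaps N g 1 ≤ cnt {0, g} N ∧
    cnt {0, g} N - nGaps N g 1 ≤ ∑ t ∈ Finset.Ioo 0 g, cnt {0, t, g} N := by
  classical
  set PX : ℕ → Prop := fun a => Nat.gcd a N = 1 ∧ Nat.gcd (a + g) N = 1 with hPX
  set PY : ℕ → Prop := fun a => Nat.gcd a N = 1 ∧ Nat.gcd (a + g) N = 1 ∧
      ((Finset.Ioo a (a + g)).filter (fun b => Nat.gcd b N = 1)).card = 0 with hPY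
  set X := (Finset.range N).filter PX with hX
  set Y := (Finset.range N).filter PY with hYdef
  have hXcard : cnt {0, g} N = X.card := by
    rw [cnt]
    congr 1
    apply Finset.filter_congr
    intro a _
    constructor
    · intro h
      exact ⟨by simpa using h 0 (by simp), h g (by simp)⟩
    · rintro ⟨h1, h2⟩ s hs
      simp only [Finset.mem_insert, Finset.mem_singleton] at hs
      rcases hs with rfl | rfl
      · simpa using h1
      · exact h2
  have hY : nGaps N g 1 = Y.card := nGaps_eq_range N g hN
  have hYX : Y ⊆ X := by
    intro a ha
    simp only [hX, hYdef, mem_filter, hPX, hPY] at ha ⊢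
    exact ⟨ha.1, ha.2.1, ha.2.2.1⟩
  have hsub : X \ Y ⊆ (Finset.Ioo 0 g).biUnion (fun t =>
      (Finset.range N).filter (fun a => ∀ s ∈ ({0, t, g} : Finset ℕ),
        Nat.gcd (a + s) N = 1)) := by
    intro a ha
    simp only [Finset.mem_sdiff, hX, hYdef, mem_filter, hPX, hPY] at ha
    obtain ⟨⟨haN, h1, h2⟩, hnot⟩ := ha
    have h3 : ¬ ((Finset.Ioo a (a + g)).filter (fun b => Nat.gcd b N = 1)).card = 0 := by
      intro hc; exact hnot ⟨haN, h1, h2, hc⟩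
    obtain ⟨b, hb⟩ := Finset.card_pos.mp (Nat.pos_of_ne_zero h3)
    simp only [mem_filter, mem_Ioo] at hb
    obtain ⟨⟨hab, hbg⟩, hbN⟩ := hb
    refine Finset.mem_biUnion.mpr ⟨b - a, ?_, ?_⟩
    · simp only [mem_Ioo]; omega
    · simp only [mem_filter, mem_range]
      refine ⟨by simpa using haN, ?_⟩
      intro s hs
      simp only [Finset.mem_insert, Finset.mem_singleton] at hs
      rcases hs with rfl | rfl | rfl
      · simpa using h1
      · have : a + (b - a) = b := by omega
        rw [this]; exact hbN
      · exact h2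
  constructor
  · rw [hXcard, hY]; exact Finset.card_le_card hYX
  · rw [hXcard, hY]
    calc X.card - Y.card = (X \ Y).card := (Finset.card_sdiff_of_subset hYX).symm
      _ ≤ _ := Finset.card_le_card hsub
      _ ≤ _ := Finset.card_biUnion_le
      _ = ∑ t ∈ Finset.Ioo 0 g, cnt {0, t, g} N :=
          Finset.sum_congr rfl fun t _ => by unfold cnt; congr 1; ext a; simp
    

lemma cnt_primorial (S : Finset ℕ) (m : ℕ) :
    cnt S (primorial m) = ∏ q ∈ (Finset.range (m+1)).filter Nat.Prime, cnt S q := by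
  rw [primorial, cnt_prod]
  intro q hq; exact (Finset.mem_filter.mp hq).2

lemma cnt_two_prime {q : ℕ} (hq : q.Prime) : cnt {0, 2} q = if q = 2 then 1 else q - 2 := by
  split_ifs with h
  · subst h; rw [cnt_pair_dvd hq (by norm_num)]
  · exact cnt_pair_not_dvd hq (fun hd => h ((Nat.prime_dvd_prime_iff_eq hq Nat.prime_two).mp hd))

lemma cnt_two_pos {q : ℕ} (hq : q.Prime) : 0 < cnt {0, 2} q := by
  rw [cnt_two_prime hq]
  split_ifs with h
  · norm_num
  · have := hq.two_le
    have h3 : 3 ≤ q := by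
      rcases Nat.lt_or_ge q 3 with h' | h'
      · interval_cases q <;> simp_all
      · exact h'
    omega

lemma cnt_two_primorial_pos (m : ℕ) : 0 < cnt {0, 2} (primorial m) := by
  rw [cnt_primorial]
  exact Finset.prod_pos fun q hq => cnt_two_pos (Finset.mem_filter.mp hq).2

lemma odd_prime_dvd {q n : ℕ} (hq : q.Prime) (hodd : Odd q) (h : q ∣ 2 * n) : q ∣ n := by
  have h2 : ¬ q ∣ 2 := by
    intro hd
    have := (Nat.prime_dvd_prime_iff_eq hq Nat.prime_two).mp hd
    subst this
    simp [Nat.odd_iff] at hodd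
  exact (Nat.Coprime.dvd_of_dvd_mul_left ((Nat.coprime_primes hq Nat.prime_two).mpr
    (fun he => h2 (he ▸ dvd_refl q))) h)

lemma three_le_odd_prime {q : ℕ} (hq : q.Prime) (hodd : Odd q) : 3 ≤ q := by
  have h2 := hq.two_le
  rcases Nat.lt_or_ge q 3 with h' | h'
  · interval_cases q
    · exact absurd (Nat.odd_iff.mp hodd) (by norm_num)
  · exact h'

lemma ratio_eq (n m : ℕ) (hn : 1 ≤ n) (hm : n ≤ m) :
    (cnt {0, 2 * n} (primorial m) : ℝ) / (cnt {0, 2} (primorial m) : ℝ)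
    = ∏ q ∈ n.primeFactors.filter (fun q => Odd q), ((q : ℝ) - 1) / ((q : ℝ) - 2) := by
  classical
  rw [cnt_primorial, cnt_primorial, Nat.cast_prod, Nat.cast_prod, ← Finset.prod_div_distrib]
  have step1 : ∏ q ∈ ((Finset.range (m+1)).filter Nat.Prime).filter (fun q => q ∣ n ∧ Odd q),
      ((cnt {0, 2*n} q : ℝ) / (cnt {0, 2} q : ℝ))
      = ∏ q ∈ (Finset.range (m+1)).filter Nat.Prime,
      ((cnt {0, 2*n} q : ℝ) / (cnt {0, 2} q : ℝ)) := by
    apply Finset.prod_filter_of_ne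
    intro q hq hne
    have hqp : q.Prime := (Finset.mem_filter.mp hq).2
    by_contra hcon
    apply hne
    push_neg at hcon
    rcases Nat.Prime.eq_two_or_odd' hqp with rfl | hodd
    · rw [cnt_pair_dvd hqp ⟨n, rfl⟩, cnt_pair_dvd hqp (by norm_num)]
      norm_num
    · have hnd : ¬ q ∣ n := fun hd => hcon hd hodd
      have h3 : 3 ≤ q := three_le_odd_prime hqp hodd
      have hnd2 : ¬ q ∣ 2 * n := fun hd => hnd (odd_prime_dvd hqp hodd hd)
      have hq2 : q ≠ 2 := by omega
      rw [cnt_pair_not_dvd hqp hnd2, cnt_pair_not_dvd hqp (by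
        intro hd
        exact hq2 ((Nat.prime_dvd_prime_iff_eq hqp Nat.prime_two).mp hd))]
      apply div_self
      have : ((q - 2 : ℕ) : ℝ) = (q : ℝ) - 2 := by
        push_cast [Nat.cast_sub (by omega : 2 ≤ q)]; ring
      rw [this]
      have : (3 : ℝ) ≤ (q : ℝ) := by exact_mod_cast h3
      linarith
  rw [← step1]
  have hset : ((Finset.range (m+1)).filter Nat.Prime).filter (fun q => q ∣ n ∧ Odd q)
      = n.primeFactors.filter (fun q => Odd q) := by
    ext q
    simp only [Finset.mem_filter, Finset.mem_range, Nat.mem_primeFactors]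
    constructor
    · rintro ⟨⟨h1, h2⟩, h3, h4⟩
      exact ⟨⟨h2, h3, by omega⟩, h4⟩
    · rintro ⟨⟨h1, h2, h3⟩, h4⟩
      have := Nat.le_of_dvd (by omega) h2
      exact ⟨⟨by omega, h1⟩, h2, h4⟩
  rw [hset]
  apply Finset.prod_congr rfl
  intro q hq
  simp only [Finset.mem_filter, Nat.mem_primeFactors] at hq
  obtain ⟨⟨hqp, hqn, -⟩, hodd⟩ := hq
  have h3 : 3 ≤ q := three_le_odd_prime hqp hodd
  have hq2 : q ≠ 2 := by omega
  rw [cnt_pair_dvd hqp (hqn.mul_left 2), cnt_pair_not_dvd hqp (by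
    intro hd
    exact hq2 ((Nat.prime_dvd_prime_iff_eq hqp Nat.prime_two).mp hd))]
  rw [Nat.cast_sub (by omega : 1 ≤ q), Nat.cast_sub (by omega : 2 ≤ q)]
  norm_num

lemma err_ratio_le (n m t : ℕ) (hn : 1 ≤ n) (ht0 : 0 < t) (ht : t < 2*n) :
    (cnt {0, t, 2*n} (primorial m) : ℝ) / (cnt {0, 2} (primorial m) : ℝ) ≤
    ((∏ q ∈ (Finset.range (2*n+1)).filter Nat.Prime, q : ℕ) : ℝ) *
    Real.exp ((∑ q ∈ (Finset.range (2*n+1)).filter Nat.Prime, 1/(q:ℝ))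
      - ∑ q ∈ (Finset.range (m+1)).filter Nat.Prime, 1/(q:ℝ)) := by
  classical
  set P := (Finset.range (m+1)).filter Nat.Prime with hP
  have hprime : ∀ q ∈ P, q.Prime := fun q hq => (Finset.mem_filter.mp hq).2
  rw [cnt_primorial, cnt_primorial, Nat.cast_prod, Nat.cast_prod, ← Finset.prod_div_distrib]
  rw [← Finset.prod_filter_mul_prod_filter_not P (fun q => q ≤ 2*n)]
  have hsmall : ∏ q ∈ P.filter (fun q => q ≤ 2*n),
      ((cnt {0, t, 2*n} q : ℝ) / (cnt {0, 2} q : ℝ))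
      ≤ ((∏ q ∈ (Finset.range (2*n+1)).filter Nat.Prime, q : ℕ) : ℝ) := by
    calc ∏ q ∈ P.filter (fun q => q ≤ 2*n), ((cnt {0, t, 2*n} q : ℝ) / (cnt {0, 2} q : ℝ))
        ≤ ∏ q ∈ P.filter (fun q => q ≤ 2*n), (q : ℝ) := by
          apply Finset.prod_le_prod
          · intro q _; positivity
          · intro q hq
            have hqp := hprime q (Finset.filter_subset _ _ hq)
            have h1 : (cnt {0, t, 2*n} q : ℝ) ≤ (q : ℝ) := by
              exact_mod_cast Nat.cast_le.mpr (cnt_le _ q)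
            have h2 : (1 : ℝ) ≤ (cnt {0, 2} q : ℝ) := by
              exact_mod_cast Nat.one_le_cast.mpr (cnt_two_pos hqp)
            calc (cnt {0, t, 2*n} q : ℝ) / (cnt {0, 2} q : ℝ)
                ≤ (cnt {0, t, 2*n} q : ℝ) := div_le_self (by positivity) h2
              _ ≤ (q : ℝ) := h1
      _ = ((∏ q ∈ P.filter (fun q => q ≤ 2*n), q : ℕ) : ℝ) := by
          rw [Nat.cast_prod]
      _ ≤ ((∏ q ∈ (Finset.range (2*n+1)).filter Nat.Prime, q : ℕ) : ℝ) := by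
          apply Nat.cast_le.mpr
          apply Finset.prod_le_prod_of_subset_of_one_le'
          · intro q hq
            simp only [hP, Finset.mem_filter, Finset.mem_range] at hq ⊢
            exact ⟨by omega, hq.1.2⟩
          · intro q hq _
            exact (Finset.mem_filter.mp hq).2.one_lt.le
  have hlarge : ∏ q ∈ P.filter (fun q => ¬ q ≤ 2*n),
      ((cnt {0, t, 2*n} q : ℝ) / (cnt {0, 2} q : ℝ))
      ≤ Real.exp (∑ q ∈ P.filter (fun q => ¬ q ≤ 2*n), -(1/(q:ℝ))) := by
    rw [Real.exp_sum]
    apply Finset.prod_le_prod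
    · intro q _; positivity
    · intro q hq
      simp only [hP, Finset.mem_filter, Finset.mem_range, not_le] at hq
      obtain ⟨⟨hqm, hqp⟩, hq2n⟩ := hq
      have h3 : 3 ≤ q := by
        have := hqp.two_le; omega
      have hc3 : cnt {0, t, 2*n} q = q - 3 := cnt_triple hqp ht0 ht hq2n
      have hq2 : ¬ q ∣ 2 := fun hd => by
        have := Nat.le_of_dvd (by norm_num) hd; omega
      have hc2 : cnt {0, 2} q = q - 2 := cnt_pair_not_dvd hqp hq2
      rw [hc3, hc2, Nat.cast_sub (by omega), Nat.cast_sub (by omega)]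
      have hq3 : (3 : ℝ) ≤ (q : ℝ) := by exact_mod_cast h3
      have hqpos : (0 : ℝ) < (q : ℝ) := by linarith
      have step : ((q:ℝ) - 3) / ((q:ℝ) - 2) ≤ 1 - 1/(q:ℝ) := by
        rw [div_le_iff₀ (by linarith : (0:ℝ) < (q:ℝ) - 2)]
        have h1 : (1/(q:ℝ)) * (q:ℝ) = 1 := by field_simp
        have h1qpos : 0 < 1/(q:ℝ) := by positivity
        nlinarith [h1, h1qpos]
      calc ((q:ℝ) - 3) / ((q:ℝ) - 2) ≤ 1 - 1/(q:ℝ) := step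
        _ ≤ Real.exp (-(1/(q:ℝ))) := by
            have := Real.add_one_le_exp (-(1/(q:ℝ)))
            linarith
  have hCpos : (0 : ℝ) ≤ ((∏ q ∈ (Finset.range (2*n+1)).filter Nat.Prime, q : ℕ) : ℝ) :=
    Nat.cast_nonneg _
  have hmul : (∏ q ∈ P.filter (fun q => q ≤ 2*n), ((cnt {0, t, 2*n} q : ℝ) / (cnt {0, 2} q : ℝ)))
      * ∏ q ∈ P.filter (fun q => ¬ q ≤ 2*n), ((cnt {0, t, 2*n} q : ℝ) / (cnt {0, 2} q : ℝ))
      ≤ ((∏ q ∈ (Finset.range (2*n+1)).filter Nat.Prime, q : ℕ) : ℝ)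
        * Real.exp (∑ q ∈ P.filter (fun q => ¬ q ≤ 2*n), -(1/(q:ℝ))) := by
    apply mul_le_mul hsmall hlarge (Finset.prod_nonneg (fun q _ => by positivity)) hCpos
  refine hmul.trans ?_
  apply mul_le_mul_of_nonneg_left _ hCpos
  apply Real.exp_le_exp.mpr
  have hsplit : (∑ q ∈ P.filter (fun q => q ≤ 2*n), 1/(q:ℝ))
      + (∑ q ∈ P.filter (fun q => ¬ q ≤ 2*n), 1/(q:ℝ))
      = ∑ q ∈ P, 1/(q:ℝ) := Finset.sum_filter_add_sum_filter_not P _ _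
  have hsm : (∑ q ∈ P.filter (fun q => q ≤ 2*n), 1/(q:ℝ))
      ≤ ∑ q ∈ (Finset.range (2*n+1)).filter Nat.Prime, 1/(q:ℝ) := by
    apply Finset.sum_le_sum_of_subset_of_nonneg
    · intro q hq
      simp only [hP, Finset.mem_filter, Finset.mem_range] at hq ⊢
      exact ⟨by omega, hq.1.2⟩
    · intro q _ _; positivity
  rw [Finset.sum_neg_distrib]
  linarith

lemma sum_primes_tendsto :
    Tendsto (fun m => ∑ q ∈ (Finset.range (m+1)).filter Nat.Prime, 1/(q:ℝ)) atTop atTop := by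
  have hnonneg : ∀ i : ℕ, 0 ≤ Set.indicator {p | Nat.Prime p} (fun n : ℕ => (1:ℝ)/n) i := by
    intro i
    apply Set.indicator_nonneg
    intro x _; positivity
  have hdiv := (not_summable_iff_tendsto_nat_atTop_of_nonneg hnonneg).mp
    not_summable_one_div_on_primes
  have heq : ∀ m : ℕ, (∑ q ∈ (Finset.range (m+1)).filter Nat.Prime, 1/(q:ℝ))
      = ∑ i ∈ Finset.range (m+1), Set.indicator {p | Nat.Prime p} (fun n : ℕ => (1:ℝ)/n) i := by
    intro m
    rw [Finset.sum_filter]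
    apply Finset.sum_congr rfl
    intro i _
    rw [Set.indicator_apply]
    simp [Set.mem_setOf_eq]
  have : Tendsto (fun m : ℕ => ∑ i ∈ Finset.range (m+1),
      Set.indicator {p | Nat.Prime p} (fun n : ℕ => (1:ℝ)/n) i) atTop atTop :=
    hdiv.comp (tendsto_add_atTop_nat 1)
  exact Tendsto.congr (fun m => (heq m).symm) this


lemma nthPrime_tendsto : Tendsto nthPrime atTop atTop := by
  have h1 : Tendsto (Nat.nth Nat.Prime) atTop atTop :=
    (Nat.nth_strictMono Nat.infinite_setOf_prime).tendsto_atTop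
  exact h1.comp (tendsto_sub_atTop_nat 1)

lemma nthPrime_two_le (k : ℕ) : 2 ≤ nthPrime k := by
  have h : Nat.Prime (nthPrime k) := Nat.nth_mem_of_infinite Nat.infinite_setOf_prime _
  exact h.two_le

lemma primorial_two_dvd (m : ℕ) (hm : 2 ≤ m) : 2 ∣ primorial m := by
  rw [primorial]
  apply Finset.dvd_prod_of_mem
  simp only [Finset.mem_filter, Finset.mem_range]
  exact ⟨by omega, Nat.prime_two⟩

theorem stmt_9 (n : ℕ) (hn : 1 ≤ n) :
    Filter.Tendsto (fun k : ℕ =>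
        (nGaps (primorial (nthPrime k)) (2 * n) 1 : ℝ) /
          (nGaps (primorial (nthPrime k)) 2 1 : ℝ))
      Filter.atTop
      (nhds (∏ q ∈ n.primeFactors.filter (fun q => Odd q),
        ((q : ℝ) - 1) / ((q : ℝ) - 2))) := by
  classical
  set T : ℝ := ∏ q ∈ n.primeFactors.filter (fun q => Odd q), ((q : ℝ) - 1) / ((q : ℝ) - 2)
    with hT
  set m : ℕ → ℕ := nthPrime with hm
  have hm2 : ∀ k, 2 ≤ m k := nthPrime_two_le
  have hN2 : ∀ k, 2 ≤ primorial (m k) := fun k =>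
    Nat.le_of_dvd (primorial_pos _) (primorial_two_dvd _ (hm2 k))
  have h2N : ∀ k, 2 ∣ primorial (m k) := fun k => primorial_two_dvd _ (hm2 k)
  set A : ℕ → ℕ := fun k => cnt {0, 2 * n} (primorial (m k)) with hA
  set D : ℕ → ℕ := fun k => cnt {0, 2} (primorial (m k)) with hD
  set E : ℕ → ℕ := fun k => A k - nGaps (primorial (m k)) (2 * n) 1 with hE
  have hDpos : ∀ k, (0 : ℝ) < (D k : ℝ) := fun k => by
    exact_mod_cast cnt_two_primorial_pos (m k)
  have hfk : ∀ k, (nGaps (primorial (m k)) (2 * n) 1 : ℝ) /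
      (nGaps (primorial (m k)) 2 1 : ℝ) = (A k : ℝ) / D k - (E k : ℝ) / D k := by
    intro k
    have hb := nGaps_bounds (primorial (m k)) (2 * n) (hN2 k) (by omega)
    have hnum : (nGaps (primorial (m k)) (2 * n) 1 : ℝ) = (A k : ℝ) - (E k : ℝ) := by
      rw [hE]
      show _ = ((cnt {0, 2 * n} (primorial (m k)) : ℕ) : ℝ) - (((cnt {0, 2 * n} (primorial (m k))) - nGaps (primorial (m k)) (2 * n) 1 : ℕ) : ℝ)
      rw [Nat.cast_sub hb.1]
      ring
    rw [nGaps_two _ (hN2 k) (h2N k), hnum, sub_div]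
  have hEupper : ∀ k, (E k : ℝ) / D k ≤ (2 * n : ℝ) *
      (((∏ q ∈ (Finset.range (2*n+1)).filter Nat.Prime, q : ℕ) : ℝ) *
      Real.exp ((∑ q ∈ (Finset.range (2*n+1)).filter Nat.Prime, 1/(q:ℝ))
        - ∑ q ∈ (Finset.range (m k + 1)).filter Nat.Prime, 1/(q:ℝ))) := by
    intro k
    have hb := nGaps_bounds (primorial (m k)) (2 * n) (hN2 k) (by omega)
    have hE1 : (E k : ℝ) ≤ ∑ t ∈ Finset.Ioo 0 (2 * n), (cnt {0, t, 2 * n} (primorial (m k)) : ℝ) := by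
      rw [← Nat.cast_sum]
      exact_mod_cast hb.2
    calc (E k : ℝ) / D k
        ≤ (∑ t ∈ Finset.Ioo 0 (2 * n), (cnt {0, t, 2 * n} (primorial (m k)) : ℝ)) / D k :=
          div_le_div_of_nonneg_right hE1 (hDpos k).le
      _ = ∑ t ∈ Finset.Ioo 0 (2 * n), (cnt {0, t, 2 * n} (primorial (m k)) : ℝ) / D k :=
          Finset.sum_div _ _ _
      _ ≤ ∑ t ∈ Finset.Ioo 0 (2 * n),
          (((∏ q ∈ (Finset.range (2*n+1)).filter Nat.Prime, q : ℕ) : ℝ) *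
          Real.exp ((∑ q ∈ (Finset.range (2*n+1)).filter Nat.Prime, 1/(q:ℝ))
            - ∑ q ∈ (Finset.range (m k + 1)).filter Nat.Prime, 1/(q:ℝ))) := by
          apply Finset.sum_le_sum
          intro t ht
          simp only [Finset.mem_Ioo] at ht
          exact err_ratio_le n (m k) t hn ht.1 ht.2
      _ ≤ _ := by
          rw [Finset.sum_const, nsmul_eq_mul]
          apply mul_le_mul_of_nonneg_right
          · have hcard : (Finset.Ioo 0 (2*n)).card ≤ 2 * n := by
              rw [Nat.card_Ioo]; omega
            calc ((Finset.Ioo 0 (2*n)).card : ℝ) ≤ ((2*n : ℕ) : ℝ) := Nat.cast_le.mpr hcard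
              _ = (2*n : ℝ) := by push_cast; ring
          · positivity
  set C : ℝ := ((∏ q ∈ (Finset.range (2*n+1)).filter Nat.Prime, q : ℕ) : ℝ) with hC
  set C' : ℝ := ∑ q ∈ (Finset.range (2*n+1)).filter Nat.Prime, 1/(q:ℝ) with hC'
  have hS : Tendsto (fun k => ∑ q ∈ (Finset.range (m k + 1)).filter Nat.Prime, 1/(q:ℝ))
      atTop atTop := sum_primes_tendsto.comp nthPrime_tendsto
  have h1 : Tendsto (fun k => C' - ∑ q ∈ (Finset.range (m k + 1)).filter Nat.Prime, 1/(q:ℝ))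
      atTop atBot := by
    have := tendsto_neg_atTop_atBot.comp hS
    have h2 := tendsto_atBot_add_const_left atTop C' this
    simpa [Function.comp, sub_eq_add_neg] using h2
  have h2 : Tendsto (fun k => Real.exp (C' -
      ∑ q ∈ (Finset.range (m k + 1)).filter Nat.Prime, 1/(q:ℝ))) atTop (nhds 0) :=
    Real.tendsto_exp_atBot.comp h1
  have hbound0 : Tendsto (fun k => (2 * n : ℝ) *
      (C * Real.exp (C' - ∑ q ∈ (Finset.range (m k + 1)).filter Nat.Prime, 1/(q:ℝ))))
      atTop (nhds 0) := by
    have h3 := (h2.const_mul C).const_mul (2 * n : ℝ)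
    simpa using h3
  have hE0 : Tendsto (fun k => (E k : ℝ) / D k) atTop (nhds 0) :=
    squeeze_zero (fun k => div_nonneg (Nat.cast_nonneg _) (hDpos k).le) hEupper hbound0
  have hev : ∀ᶠ k in atTop, (A k : ℝ) / D k = T := by
    filter_upwards [nthPrime_tendsto.eventually_ge_atTop n] with k hk
    exact ratio_eq n (m k) hn hk
  have hfinal : Tendsto (fun k => T - (E k : ℝ) / D k) atTop (nhds T) := by
    simpa using tendsto_const_nhds.sub hE0
  apply Tendsto.congr' _ hfinal
  filter_upwards [hev] with k hk
  rw [hfk k, ← hk]
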